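/- For integers 1 ≤ i < k and 0 < l < q ≤ M, E(U_{i,l,m,n} U_{k,q,m,n}) = θ_n^{l+q} (E ξ_0²)² · ( 1_{A₁} + 1_{A₂} Σ_{j=0}^{m−1−(l+q)} θ_n^{2j} ), where A₁ denotes the condition i + l > k and A₂ the condition i + l = k. -/

import Mathlib

set_option maxHeartbeats 1000000
open MeasureTheory ProbabilityTheory Filter Real
open scoped ENNReal

set_option linter.unusedSectionVars false

section Prim
variable {Ω : Type*} [MeasureSpace Ω] [IsProbabilityMeasure (ℙ : Measure Ω)]
  (ξ : ℤ → Ω → ℝ) (hmeas : ∀ k, Measurable (ξ k))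
  (hindep : iIndepFun ξ ℙ)
  (hident : ∀ k, IdentDistrib (ξ k) (ξ 0) ℙ ℙ)
  (hcentered : 𝔼[ξ 0] = 0)
  (hL4 : MemLp (ξ 0) 4 ℙ)

include hmeas hindep hident hcentered hL4

lemma xi_mem4 (a : ℤ) : MemLp (ξ a) 4 ℙ := (hident a).symm.memLp_snd hL4

lemma xi_mem2 (a b : ℤ) : MemLp (fun ω => ξ a ω * ξ b ω) 2 ℙ := by
  have : ENNReal.HolderTriple 4 4 2 := ⟨by
    rw [← two_mul, show (4:ℝ≥0∞) = 2*2 by norm_num, ENNReal.mul_inv (by simp) (by simp),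
      ← mul_assoc, ENNReal.mul_inv_cancel (by simp) (by simp), one_mul]⟩
  have h := (xi_mem4 ξ hmeas hindep hident hcentered hL4 b).smul (φ := ξ a)
    (xi_mem4 ξ hmeas hindep hident hcentered hL4 a) (r := 2)
  have he : (ξ a • ξ b) = fun ω => ξ a ω * ξ b ω := by
    funext ω; simp [Pi.smul_apply', smul_eq_mul]
  rwa [he] at h

lemma xi_int2 (a b : ℤ) : Integrable (fun ω => ξ a ω * ξ b ω) ℙ :=
  ((xi_mem2 ξ hmeas hindep hident hcentered hL4 a b).mono_exponent
    (by norm_num)).integrable le_rfl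

lemma xi_int1 (a : ℤ) : Integrable (ξ a) ℙ :=
  (xi_mem4 ξ hmeas hindep hident hcentered hL4 a).integrable (by norm_num)

lemma xi_int4 (a b c d : ℤ) :
    Integrable (fun ω => ξ a ω * ξ b ω * (ξ c ω * ξ d ω)) ℙ := by
  have h := (xi_mem2 ξ hmeas hindep hident hcentered hL4 c d).smul
    (φ := fun ω => ξ a ω * ξ b ω) (xi_mem2 ξ hmeas hindep hident hcentered hL4 a b) (r := 1)
  refine memLp_one_iff_integrable.mp ?_
  have he : ((fun ω => ξ a ω * ξ b ω) • fun ω => ξ c ω * ξ d ω)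
      = fun ω => ξ a ω * ξ b ω * (ξ c ω * ξ d ω) := by
    funext ω; simp [Pi.smul_apply', smul_eq_mul]
  rwa [he] at h

lemma xi_mean (a : ℤ) : ∫ ω, ξ a ω = 0 := by
  have := (hident a).integral_eq
  simpa [this] using hcentered

lemma xi_sq (a : ℤ) : ∫ ω, ξ a ω * ξ a ω = ∫ ω, (ξ 0 ω) ^ 2 := by
  have h := ((hident a).comp (measurable_id.pow_const 2)).integral_eq
  calc ∫ ω, ξ a ω * ξ a ω = ∫ ω, (ξ a ω) ^ 2 := by
        refine integral_congr_ae (Filter.Eventually.of_forall fun ω => ?_); ring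
    _ = ∫ ω, (ξ 0 ω) ^ 2 := h

lemma xi_pair (a b : ℤ) :
    ∫ ω, ξ a ω * ξ b ω = if a = b then ∫ ω, (ξ 0 ω) ^ 2 else 0 := by
  by_cases h : a = b
  · subst h; rw [if_pos rfl]; exact xi_sq ξ hmeas hindep hident hcentered hL4 a
  · rw [if_neg h]
    have hi := (hindep.indepFun h).integral_mul_eq_mul_integral (hmeas a).aestronglyMeasurable
      (hmeas b).aestronglyMeasurable
    simp only [Pi.mul_apply] at hi
    rw [show (fun ω => ξ a ω * ξ b ω) = (ξ a * ξ b) from rfl] at *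
    simpa [xi_mean ξ hmeas hindep hident hcentered hL4] using hi

lemma xi_pp (a b c d : ℤ) (h1 : a ≠ c) (h2 : a ≠ d) (h3 : b ≠ c) (h4 : b ≠ d) :
    ∫ ω, ξ a ω * ξ b ω * (ξ c ω * ξ d ω) =
      (if a = b then ∫ ω, (ξ 0 ω) ^ 2 else 0) * (if c = d then ∫ ω, (ξ 0 ω) ^ 2 else 0) := by
  have hi := (hindep.indepFun_mul_mul hmeas a b c d h1 h2 h3 h4).integral_mul_eq_mul_integral
    ((hmeas a).mul (hmeas b)).aestronglyMeasurable ((hmeas c).mul (hmeas d)).aestronglyMeasurable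
  simp only [Pi.mul_apply] at hi
  rw [show (fun ω => ξ a ω * ξ b ω * (ξ c ω * ξ d ω)) = (ξ a * ξ b * (ξ c * ξ d)) from rfl]
  rw [show (ξ a * ξ b * (ξ c * ξ d)) = (ξ a * ξ b) * (ξ c * ξ d) from rfl] at *
  rw [show integral ℙ (ξ a * ξ b * (ξ c * ξ d)) = ∫ ω, ξ a ω * ξ b ω * (ξ c ω * ξ d ω) from rfl,
    hi, xi_pair ξ hmeas hindep hident hcentered hL4, xi_pair ξ hmeas hindep hident hcentered hL4]

lemma xi_cube (x y : ℤ) (hxy : x ≠ y) :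
    ∫ ω, ξ x ω * ξ x ω * ξ x ω * ξ y ω = 0 := by
  have hcube : Measurable (fun t : ℝ => t*t*t) := by measurability
  have hi0 : IndepFun ((fun t : ℝ => t*t*t) ∘ ξ x) (id ∘ ξ y) ℙ :=
    (hindep.indepFun hxy).comp hcube measurable_id
  have ha : AEStronglyMeasurable ((fun t : ℝ => t*t*t) ∘ ξ x) ℙ :=
    (hcube.comp (hmeas x)).aestronglyMeasurable
  have hb : AEStronglyMeasurable (id ∘ ξ y) ℙ := (hmeas y).aestronglyMeasurable
  have hi := hi0.integral_mul_eq_mul_integral ha hb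
  have he : (fun ω => ξ x ω * ξ x ω * ξ x ω * ξ y ω)
      = ((fun t : ℝ => t*t*t) ∘ ξ x * id ∘ ξ y) := rfl
  rw [he, hi, show integral ℙ (id ∘ ξ y) = ∫ ω, ξ y ω from rfl, xi_mean ξ hmeas hindep hident hcentered hL4, mul_zero]



lemma xi_quad (a b c d : ℤ) (h : ¬(a = b ∧ b = c ∧ c = d)) :
    ∫ ω, ξ a ω * ξ b ω * (ξ c ω * ξ d ω) =
      (∫ ω, (ξ 0 ω) ^ 2) ^ 2 *
        ((if a = b ∧ c = d then (1:ℝ) else 0) + (if a = c ∧ b = d then 1 else 0) +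
          (if a = d ∧ b = c then 1 else 0)) := by
  have pp := xi_pp ξ hmeas hindep hident hcentered hL4
  have cube := xi_cube ξ hmeas hindep hident hcentered hL4
  by_cases hab : a = b
  · by_cases hcd : c = d
    · by_cases hac : a = c
      · exact absurd ⟨hab, by omega, hcd⟩ h
      · rw [pp a b c d (by omega) (by omega) (by omega) (by omega), if_pos hab, if_pos hcd,
          if_pos ⟨hab, hcd⟩, if_neg (by omega), if_neg (by omega)]
        ring
    · have hz : ∫ ω, ξ a ω * ξ b ω * (ξ c ω * ξ d ω) = 0 := by
        by_cases hac : a = c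
        · rw [show (fun ω => ξ a ω * ξ b ω * (ξ c ω * ξ d ω))
            = fun ω => ξ a ω * ξ a ω * ξ a ω * ξ d ω from
            funext fun ω => by rw [← hab, ← hac]; ring]
          exact cube a d (by omega)
        · by_cases had : a = d
          · rw [show (fun ω => ξ a ω * ξ b ω * (ξ c ω * ξ d ω))
              = fun ω => ξ a ω * ξ a ω * ξ a ω * ξ c ω from
              funext fun ω => by rw [← hab, ← had]; ring]
            exact cube a c (by omega)
          · rw [pp a b c d (by omega) (by omega) (by omega) (by omega), if_neg hcd, mul_zero]
      rw [hz, if_neg (by omega), if_neg (by omega), if_neg (by omega)]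
      ring
  · by_cases hcd : c = d
    · have hz : ∫ ω, ξ a ω * ξ b ω * (ξ c ω * ξ d ω) = 0 := by
        by_cases hca : c = a
        · rw [show (fun ω => ξ a ω * ξ b ω * (ξ c ω * ξ d ω))
            = fun ω => ξ c ω * ξ c ω * ξ c ω * ξ b ω from
            funext fun ω => by rw [← hca, ← hcd]; ring]
          exact cube c b (by omega)
        · by_cases hcb : c = b
          · rw [show (fun ω => ξ a ω * ξ b ω * (ξ c ω * ξ d ω))
              = fun ω => ξ c ω * ξ c ω * ξ c ω * ξ a ω from
              funext fun ω => by rw [← hcb, ← hcd]; ring]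
            exact cube c a (by omega)
          · rw [pp a b c d (by omega) (by omega) (by omega) (by omega), if_neg hab, zero_mul]
      rw [hz, if_neg (by omega), if_neg (by omega), if_neg (by omega)]
      ring
    · by_cases hac : a = c
      · by_cases hbd : b = d
        · rw [show (fun ω => ξ a ω * ξ b ω * (ξ c ω * ξ d ω))
            = fun ω => ξ a ω * ξ a ω * (ξ b ω * ξ b ω) from
            funext fun ω => by rw [← hac, ← hbd]; ring]
          rw [pp a a b b hab hab hab hab, if_pos rfl, if_pos rfl,
            if_neg (by omega), if_pos ⟨hac, hbd⟩, if_neg (by omega)]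
          ring
        · rw [show (fun ω => ξ a ω * ξ b ω * (ξ c ω * ξ d ω))
            = fun ω => ξ a ω * ξ a ω * (ξ b ω * ξ d ω) from
            funext fun ω => by rw [← hac]; ring]
          rw [pp a a b d hab (by omega) hab (by omega), if_neg hbd, mul_zero,
            if_neg (by omega), if_neg (by omega), if_neg (by omega)]
          ring
      · by_cases had : a = d
        · by_cases hbc : b = c
          · rw [show (fun ω => ξ a ω * ξ b ω * (ξ c ω * ξ d ω))
              = fun ω => ξ a ω * ξ a ω * (ξ b ω * ξ b ω) from
              funext fun ω => by rw [← had, ← hbc]; ring]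
            rw [pp a a b b hab hab hab hab, if_pos rfl, if_pos rfl,
              if_neg (by omega), if_neg (by omega), if_pos ⟨had, hbc⟩]
            ring
          · rw [show (fun ω => ξ a ω * ξ b ω * (ξ c ω * ξ d ω))
              = fun ω => ξ a ω * ξ a ω * (ξ b ω * ξ c ω) from
              funext fun ω => by rw [← had]; ring]
            rw [pp a a b c hab (by omega) hab (by omega), if_neg hbc, mul_zero,
              if_neg (by omega), if_neg (by omega), if_neg (by omega)]
            ring
        · have hz : ∫ ω, ξ a ω * ξ b ω * (ξ c ω * ξ d ω) = 0 := by
            by_cases hbc : b = c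
            · by_cases hbd : b = d
              · rw [show (fun ω => ξ a ω * ξ b ω * (ξ c ω * ξ d ω))
                  = fun ω => ξ b ω * ξ b ω * ξ b ω * ξ a ω from
                  funext fun ω => by rw [← hbc, ← hbd]; ring]
                exact cube b a (by omega)
              · rw [show (fun ω => ξ a ω * ξ b ω * (ξ c ω * ξ d ω))
                  = fun ω => ξ b ω * ξ b ω * (ξ d ω * ξ a ω) from
                  funext fun ω => by rw [← hbc]; ring]
                rw [pp b b d a hbd (by omega) hbd (by omega), if_neg (show d ≠ a by omega), mul_zero]
            · by_cases hbd : b = d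
              · rw [show (fun ω => ξ a ω * ξ b ω * (ξ c ω * ξ d ω))
                  = fun ω => ξ b ω * ξ b ω * (ξ c ω * ξ a ω) from
                  funext fun ω => by rw [← hbd]; ring]
                rw [pp b b c a hbc (by omega) hbc (by omega), if_neg (show c ≠ a by omega), mul_zero]
              · rw [pp a b c d hac had hbc hbd, if_neg hab, zero_mul]
          rw [hz, if_neg (by omega), if_neg (by omega), if_neg (by omega)]
          ring
end Prim


lemma integral_double_sum {Ω : Type*} [MeasureSpace Ω] {ι κ : Type*}
    (s : Finset ι) (u : Finset κ) (F : ι → κ → Ω → ℝ)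
    (h : ∀ a ∈ s, ∀ b ∈ u, Integrable (F a b) ℙ) :
    ∫ ω, (∑ a ∈ s, ∑ b ∈ u, F a b ω) = ∑ a ∈ s, ∑ b ∈ u, ∫ ω, F a b ω := by
  rw [integral_finset_sum s (fun a ha => integrable_finset_sum u (fun b hb => h a ha b hb))]
  exact Finset.sum_congr rfl fun a ha => integral_finset_sum u (fun b hb => h a ha b hb)


section Sums
variable {Ω : Type*} [MeasureSpace Ω] [IsProbabilityMeasure (ℙ : Measure Ω)]
  (ξ : ℤ → Ω → ℝ) (hmeas : ∀ k, Measurable (ξ k))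
  (hindep : iIndepFun ξ ℙ)
  (hident : ∀ k, IdentDistrib (ξ k) (ξ 0) ℙ ℙ)
  (hcentered : 𝔼[ξ 0] = 0)
  (hL4 : MemLp (ξ 0) 4 ℙ)
  (θ : ℝ)

include hmeas hindep hident hcentered hL4

lemma L_term (c1 c2 : ℝ) (a b c d : ℤ) (h : ¬(a = b ∧ b = c ∧ c = d)) :
    ∫ ω, (c1 * (ξ a ω * ξ b ω)) * (c2 * (ξ c ω * ξ d ω)) =
      c1 * c2 * ((∫ ω, (ξ 0 ω) ^ 2) ^ 2 *
        ((if a = b ∧ c = d then (1:ℝ) else 0) + (if a = c ∧ b = d then 1 else 0) +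
          (if a = d ∧ b = c then 1 else 0))) := by
  rw [show (fun ω => (c1 * (ξ a ω * ξ b ω)) * (c2 * (ξ c ω * ξ d ω)))
      = fun ω => (c1 * c2) * (ξ a ω * ξ b ω * (ξ c ω * ξ d ω)) from funext fun ω => by ring,
    integral_const_mul, xi_quad ξ hmeas hindep hident hcentered hL4 a b c d h, mul_assoc]

lemma L_int_term (c1 c2 : ℝ) (a b c d : ℤ) :
    Integrable (fun ω => (c1 * (ξ a ω * ξ b ω)) * (c2 * (ξ c ω * ξ d ω))) ℙ := by
  rw [show (fun ω => (c1 * (ξ a ω * ξ b ω)) * (c2 * (ξ c ω * ξ d ω)))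
      = fun ω => (c1 * c2) * (ξ a ω * ξ b ω * (ξ c ω * ξ d ω)) from funext fun ω => by ring]
  exact (xi_int4 ξ hmeas hindep hident hcentered hL4 a b c d).const_mul _

lemma L_A (mm r s : ℕ) (hs : s < mm) :
    ∫ ω, (∑ t ∈ Finset.range mm, θ ^ t * (ξ ((r:ℤ) + s - t) ω * ξ (r:ℤ) ω)) =
      θ ^ s * ∫ ω, (ξ 0 ω) ^ 2 := by
  rw [integral_finset_sum (μ := ℙ) (Finset.range mm)
    (f := fun (t : ℕ) ω => θ ^ t * (ξ ((r:ℤ) + s - t) ω * ξ (r:ℤ) ω)) (fun t _ =>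
    (xi_int2 ξ hmeas hindep hident hcentered hL4 ((r:ℤ) + s - t) (r:ℤ)).const_mul _)]
  have hterm : ∀ t ∈ Finset.range mm,
      (∫ ω, θ ^ t * (ξ ((r:ℤ) + s - t) ω * ξ (r:ℤ) ω))
        = if t = s then θ ^ s * ∫ ω, (ξ 0 ω) ^ 2 else 0 := by
    intro t ht
    rw [integral_const_mul, xi_pair ξ hmeas hindep hident hcentered hL4]
    by_cases hts : t = s
    · subst hts
      rw [if_pos (by omega), if_pos rfl]
    · rw [if_neg (by omega), mul_zero, if_neg hts]
  rw [Finset.sum_congr rfl hterm, Finset.sum_ite_eq' (Finset.range mm) s,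
    if_pos (Finset.mem_range.2 hs)]

lemma L_B (mm r s : ℕ) (hs : 0 < s) :
    ∫ ω, (∑ j ∈ Finset.Icc 1 (mm - 1), θ ^ j * (ξ ((r:ℤ) + s) ω * ξ ((r:ℤ) - j) ω)) = 0 := by
  rw [integral_finset_sum (μ := ℙ) (Finset.Icc 1 (mm - 1))
    (f := fun (j : ℕ) ω => θ ^ j * (ξ ((r:ℤ) + s) ω * ξ ((r:ℤ) - j) ω)) (fun j _ =>
    (xi_int2 ξ hmeas hindep hident hcentered hL4 ((r:ℤ) + s) ((r:ℤ) - j)).const_mul _)]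
  refine Finset.sum_eq_zero fun j hj => ?_
  rw [integral_const_mul, xi_pair ξ hmeas hindep hident hcentered hL4,
    if_neg (by omega), mul_zero]

lemma L_AA (M m l q i k : ℕ) (hl : 0 < l) (hlq : l < q) (hqM : q ≤ M) (hm : 2 * M < m)
    (hik : i < k) :
    ∫ ω, (∑ t ∈ Finset.range m, ∑ t' ∈ Finset.range m,
        (θ ^ t * (ξ ((i:ℤ) + l - t) ω * ξ (i:ℤ) ω)) *
          (θ ^ t' * (ξ ((k:ℤ) + q - t') ω * ξ (k:ℤ) ω))) =
      θ ^ (l + q) * (∫ ω, (ξ 0 ω) ^ 2) ^ 2 +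
        (if k ≤ i + l then θ ^ (l + q) * (∫ ω, (ξ 0 ω) ^ 2) ^ 2 else 0) := by
  have hterm : ∀ t ∈ Finset.range m, ∀ t' ∈ Finset.range m,
      (∫ ω, (θ ^ t * (ξ ((i:ℤ) + l - t) ω * ξ (i:ℤ) ω)) *
          (θ ^ t' * (ξ ((k:ℤ) + q - t') ω * ξ (k:ℤ) ω))) =
        (if t = l ∧ t' = q then θ ^ (l + q) * (∫ ω, (ξ 0 ω) ^ 2) ^ 2 else 0) +
          (if ((i:ℤ) + l - t = k ∧ (i:ℤ) = (k:ℤ) + q - t')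
            then θ ^ (l + q) * (∫ ω, (ξ 0 ω) ^ 2) ^ 2 else 0) := by
    intro t ht t' ht'
    rw [L_term ξ hmeas hindep hident hcentered hL4 _ _ _ _ _ _ (by omega)]
    rw [if_neg (show ¬((i:ℤ) + l - t = (k:ℤ) + q - t' ∧ (i:ℤ) = k) by omega)]
    by_cases h1 : t = l ∧ t' = q
    · rw [if_pos (show ((i:ℤ) + l - t = i ∧ (k:ℤ) + q - t' = k) by omega),
        if_neg (show ¬((i:ℤ) + l - t = k ∧ (i:ℤ) = (k:ℤ) + q - t') by omega),
        if_pos h1,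
        if_neg (show ¬((i:ℤ) + l - t = k ∧ (i:ℤ) = (k:ℤ) + q - t') by omega)]
      obtain ⟨rfl, rfl⟩ := h1
      rw [← pow_add]
      ring
    · rw [if_neg (show ¬((i:ℤ) + l - t = i ∧ (k:ℤ) + q - t' = k) by omega), if_neg h1]
      by_cases h2 : ((i:ℤ) + l - t = k ∧ (i:ℤ) = (k:ℤ) + q - t')
      · rw [if_pos h2, if_pos h2]
        have htt' : t + t' = l + q := by omega
        rw [show θ ^ t * (θ ^ t') = θ ^ (t + t') from (pow_add θ t t').symm, htt']
        ring
      · rw [if_neg h2, if_neg h2]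
        ring
  rw [integral_double_sum _ _ _ (fun t _ t' _ =>
      L_int_term ξ hmeas hindep hident hcentered hL4 _ _ _ _ _ _)]
  rw [Finset.sum_congr rfl (fun t ht => Finset.sum_congr rfl (fun t' ht' => hterm t ht t' ht'))]
  rw [Finset.sum_congr rfl (fun t ht => Finset.sum_add_distrib), Finset.sum_add_distrib]
  congr 1
  · have inner : ∀ t ∈ Finset.range m, (∑ t' ∈ Finset.range m,
        (if t = l ∧ t' = q then θ ^ (l + q) * (∫ ω, (ξ 0 ω) ^ 2) ^ 2 else 0)) =
        (if t = l then θ ^ (l + q) * (∫ ω, (ξ 0 ω) ^ 2) ^ 2 else 0) := by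
      intro t ht
      by_cases h : t = l
      · rw [if_pos h,
          Finset.sum_congr rfl (fun (t' : ℕ) _ =>
            if_congr (show (t = l ∧ t' = q) ↔ t' = q by omega) rfl rfl),
          Finset.sum_ite_eq' (Finset.range m) q, if_pos (Finset.mem_range.2 (by omega))]
      · rw [if_neg h]
        exact Finset.sum_eq_zero fun t' _ => if_neg (by tauto)
    rw [Finset.sum_congr rfl inner, Finset.sum_ite_eq' (Finset.range m) l,
      if_pos (Finset.mem_range.2 (by omega))]
  · by_cases hk : k ≤ i + l
    · rw [if_pos hk]
      have inner : ∀ t ∈ Finset.range m, (∑ t' ∈ Finset.range m,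
          (if ((i:ℤ) + l - t = k ∧ (i:ℤ) = (k:ℤ) + q - t')
            then θ ^ (l + q) * (∫ ω, (ξ 0 ω) ^ 2) ^ 2 else 0)) =
          (if t = i + l - k then θ ^ (l + q) * (∫ ω, (ξ 0 ω) ^ 2) ^ 2 else 0) := by
        intro t ht
        by_cases h : t = i + l - k
        · rw [if_pos h,
            Finset.sum_congr rfl (fun (t' : ℕ) _ =>
              if_congr (show ((i:ℤ) + l - t = k ∧ (i:ℤ) = (k:ℤ) + q - t')
                ↔ t' = k + q - i by omega) rfl rfl),
            Finset.sum_ite_eq' (Finset.range m) (k + q - i),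
            if_pos (Finset.mem_range.2 (by omega))]
        · rw [if_neg h]
          exact Finset.sum_eq_zero fun t' _ => if_neg (by omega)
      rw [Finset.sum_congr rfl inner, Finset.sum_ite_eq' (Finset.range m) (i + l - k),
        if_pos (Finset.mem_range.2 (by omega))]
    · rw [if_neg hk]
      refine Finset.sum_eq_zero fun t _ => Finset.sum_eq_zero fun t' _ => if_neg (by omega)

lemma L_AB (M m l q i k : ℕ) (hl : 0 < l) (hlq : l < q) (hqM : q ≤ M) (hm : 2 * M < m)
    (hik : i < k) :
    ∫ ω, (∑ t ∈ Finset.range m, ∑ j' ∈ Finset.Icc 1 (m - 1),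
        (θ ^ t * (ξ ((i:ℤ) + l - t) ω * ξ (i:ℤ) ω)) *
          (θ ^ j' * (ξ ((k:ℤ) + q) ω * ξ ((k:ℤ) - j') ω))) = 0 := by
  rw [integral_double_sum _ _ _ (fun t _ j' _ =>
      L_int_term ξ hmeas hindep hident hcentered hL4 _ _ _ _ _ _)]
  refine Finset.sum_eq_zero fun t ht => Finset.sum_eq_zero fun j' hj' => ?_
  have hj'1 : 1 ≤ j' := (Finset.mem_Icc.1 hj').1
  rw [L_term ξ hmeas hindep hident hcentered hL4 _ _ _ _ _ _ (by omega),
    if_neg (show ¬((i:ℤ) + l - t = i ∧ (k:ℤ) + q = (k:ℤ) - j') by omega),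
    if_neg (show ¬((i:ℤ) + l - t = (k:ℤ) + q ∧ (i:ℤ) = (k:ℤ) - j') by omega),
    if_neg (show ¬((i:ℤ) + l - t = (k:ℤ) - j' ∧ (i:ℤ) = (k:ℤ) + q) by omega)]
  ring

lemma L_BB (M m l q i k : ℕ) (hl : 0 < l) (hlq : l < q) (hqM : q ≤ M) (hm : 2 * M < m)
    (hik : i < k) :
    ∫ ω, (∑ j ∈ Finset.Icc 1 (m - 1), ∑ j' ∈ Finset.Icc 1 (m - 1),
        (θ ^ j * (ξ ((i:ℤ) + l) ω * ξ ((i:ℤ) - j) ω)) *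
          (θ ^ j' * (ξ ((k:ℤ) + q) ω * ξ ((k:ℤ) - j') ω))) = 0 := by
  rw [integral_double_sum _ _ _ (fun j _ j' _ =>
      L_int_term ξ hmeas hindep hident hcentered hL4 _ _ _ _ _ _)]
  refine Finset.sum_eq_zero fun j hj => Finset.sum_eq_zero fun j' hj' => ?_
  have hj1 : 1 ≤ j := (Finset.mem_Icc.1 hj).1
  have hj'1 : 1 ≤ j' := (Finset.mem_Icc.1 hj').1
  rw [L_term ξ hmeas hindep hident hcentered hL4 _ _ _ _ _ _ (by omega),
    if_neg (show ¬((i:ℤ) + l = (i:ℤ) - j ∧ (k:ℤ) + q = (k:ℤ) - j') by omega),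
    if_neg (show ¬((i:ℤ) + l = (k:ℤ) + q ∧ (i:ℤ) - j = (k:ℤ) - j') by omega),
    if_neg (show ¬((i:ℤ) + l = (k:ℤ) - j' ∧ (i:ℤ) - j = (k:ℤ) + q) by omega)]
  ring

lemma L_BA (M m l q i k : ℕ) (hl : 0 < l) (hlq : l < q) (hqM : q ≤ M) (hm : 2 * M < m)
    (hik : i < k) :
    ∫ ω, (∑ j ∈ Finset.Icc 1 (m - 1), ∑ t' ∈ Finset.range m,
        (θ ^ j * (ξ ((i:ℤ) + l) ω * ξ ((i:ℤ) - j) ω)) *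
          (θ ^ t' * (ξ ((k:ℤ) + q - t') ω * ξ (k:ℤ) ω))) =
      if i + l = k then
        θ ^ (l + q) * (∫ ω, (ξ 0 ω) ^ 2) ^ 2 * ∑ j ∈ Finset.Icc 1 (m - 1 - (l + q)), θ ^ (2 * j)
      else 0 := by
  have hterm : ∀ j ∈ Finset.Icc 1 (m - 1), ∀ t' ∈ Finset.range m,
      (∫ ω, (θ ^ j * (ξ ((i:ℤ) + l) ω * ξ ((i:ℤ) - j) ω)) *
          (θ ^ t' * (ξ ((k:ℤ) + q - t') ω * ξ (k:ℤ) ω))) =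
        (if ((i:ℤ) + l = k ∧ (i:ℤ) - j = (k:ℤ) + q - t')
          then θ ^ (l + q) * θ ^ (2 * j) * (∫ ω, (ξ 0 ω) ^ 2) ^ 2 else 0) := by
    intro j hj t' ht'
    have hj1 : 1 ≤ j := (Finset.mem_Icc.1 hj).1
    rw [L_term ξ hmeas hindep hident hcentered hL4 _ _ _ _ _ _ (by omega),
      if_neg (show ¬((i:ℤ) + l = (i:ℤ) - j ∧ (k:ℤ) + q - t' = k) by omega),
      if_neg (show ¬((i:ℤ) + l = (k:ℤ) + q - t' ∧ (i:ℤ) - j = k) by omega)]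
    by_cases h2 : ((i:ℤ) + l = k ∧ (i:ℤ) - j = (k:ℤ) + q - t')
    · rw [if_pos h2, if_pos h2]
      have hjt : j + t' = l + q + 2 * j := by omega
      rw [show θ ^ j * (θ ^ t') = θ ^ (j + t') from (pow_add θ j t').symm, hjt,
        pow_add, pow_add]
      ring
    · rw [if_neg h2, if_neg h2]
      ring
  rw [integral_double_sum _ _ _ (fun j _ t' _ =>
      L_int_term ξ hmeas hindep hident hcentered hL4 _ _ _ _ _ _)]
  rw [Finset.sum_congr rfl (fun j hj => Finset.sum_congr rfl (fun t' ht' => hterm j hj t' ht'))]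
  by_cases hkeq : i + l = k
  · rw [if_pos hkeq]
    have inner : ∀ j ∈ Finset.Icc 1 (m - 1), (∑ t' ∈ Finset.range m,
        (if ((i:ℤ) + l = k ∧ (i:ℤ) - j = (k:ℤ) + q - t')
          then θ ^ (l + q) * θ ^ (2 * j) * (∫ ω, (ξ 0 ω) ^ 2) ^ 2 else 0)) =
        (if l + q + j < m
          then θ ^ (l + q) * θ ^ (2 * j) * (∫ ω, (ξ 0 ω) ^ 2) ^ 2 else 0) := by
      intro j hj
      rw [Finset.sum_congr rfl (fun (t' : ℕ) _ =>
        if_congr (show ((i:ℤ) + l = k ∧ (i:ℤ) - j = (k:ℤ) + q - t')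
          ↔ t' = l + q + j by omega) rfl rfl),
        Finset.sum_ite_eq' (Finset.range m) (l + q + j)]
      exact if_congr Finset.mem_range rfl rfl
    rw [Finset.sum_congr rfl inner, ← Finset.sum_filter,
      show (Finset.Icc 1 (m - 1)).filter (fun j => l + q + j < m)
          = Finset.Icc 1 (m - 1 - (l + q)) by
        ext j
        simp only [Finset.mem_filter, Finset.mem_Icc]
        omega,
      Finset.mul_sum]
    exact Finset.sum_congr rfl fun j _ => by ring
  · rw [if_neg hkeq]
    refine Finset.sum_eq_zero fun j hj => Finset.sum_eq_zero fun t' _ => if_neg (by omega)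

end Sums

lemma int_decomp {Ω : Type*} [MeasureSpace Ω] [IsProbabilityMeasure (ℙ : Measure Ω)]
    (S1 S2 S3 S4 A B A' B' : Ω → ℝ) (c c' : ℝ)
    (h1 : Integrable S1 ℙ) (h2 : Integrable S2 ℙ) (h3 : Integrable S3 ℙ) (h4 : Integrable S4 ℙ)
    (hA : Integrable A ℙ) (hB : Integrable B ℙ) (hA' : Integrable A' ℙ)
    (hB' : Integrable B' ℙ) :
    ∫ ω, (S1 ω + S2 ω + S3 ω + S4 ω - c' * A ω - c' * B ω - c * A' ω - c * B' ω + c * c') =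
      (∫ ω, S1 ω) + (∫ ω, S2 ω) + (∫ ω, S3 ω) + (∫ ω, S4 ω)
        - c' * (∫ ω, A ω) - c' * (∫ ω, B ω) - c * (∫ ω, A' ω) - c * (∫ ω, B' ω) + c * c' := by
  have i1 : Integrable (fun ω => S1 ω + S2 ω) ℙ := h1.add h2
  have i2 : Integrable (fun ω => S1 ω + S2 ω + S3 ω) ℙ := i1.add h3
  have i3 : Integrable (fun ω => S1 ω + S2 ω + S3 ω + S4 ω) ℙ := i2.add h4
  have i4 : Integrable (fun ω => S1 ω + S2 ω + S3 ω + S4 ω - c' * A ω) ℙ :=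
    i3.sub (hA.const_mul c')
  have i5 : Integrable (fun ω => S1 ω + S2 ω + S3 ω + S4 ω - c' * A ω - c' * B ω) ℙ :=
    i4.sub (hB.const_mul c')
  have i6 : Integrable
      (fun ω => S1 ω + S2 ω + S3 ω + S4 ω - c' * A ω - c' * B ω - c * A' ω) ℙ :=
    i5.sub (hA'.const_mul c)
  have i7 : Integrable
      (fun ω => S1 ω + S2 ω + S3 ω + S4 ω - c' * A ω - c' * B ω - c * A' ω - c * B' ω) ℙ :=
    i6.sub (hB'.const_mul c)
  rw [integral_add i7 (integrable_const _), integral_sub i6 (hB'.const_mul c),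
    integral_sub i5 (hA'.const_mul c), integral_sub i4 (hB.const_mul c'),
    integral_sub i3 (hA.const_mul c'), integral_add i2 h4, integral_add i1 h3,
    integral_add h1 h2, integral_const_mul c', integral_const_mul c',
    integral_const_mul c, integral_const_mul c, integral_const]
  simp

theorem U_cross_covariance_increasing_lags
    {Ω : Type*} [MeasureSpace Ω] [IsProbabilityMeasure (ℙ : Measure Ω)]
    (ξ : ℤ → Ω → ℝ)
    (hmeas : ∀ k, Measurable (ξ k))
    (hindep : iIndepFun ξ ℙ)
    (hident : ∀ k, IdentDistrib (ξ k) (ξ 0) ℙ ℙ)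
    (hcentered : 𝔼[ξ 0] = 0)
    (hL4 : MemLp (ξ 0) 4 ℙ)
    (θ : ℝ) (hθ : θ ∈ Set.Ico (0 : ℝ) 1)
    (M m : ℕ) (hm : 2 * M < m)
    (U : ℕ → ℕ → Ω → ℝ)
    (hU : ∀ k l ω, U k l ω =
      ∑ j ∈ Finset.Icc 1 (m - 1), θ ^ j * ξ ((k : ℤ) + l - j) ω * ξ (k : ℤ) ω +
      ∑ j ∈ Finset.Icc 1 (m - 1), θ ^ j * ξ ((k : ℤ) + l) ω * ξ ((k : ℤ) - j) ω +
      ξ ((k : ℤ) + l) ω * ξ (k : ℤ) ω - θ ^ l * 𝔼[fun ω => (ξ 0 ω) ^ 2])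
    (l q : ℕ) (hl : 0 < l) (hlq : l < q) (hqM : q ≤ M)
    (i k : ℕ) (hi : 1 ≤ i) (hik : i < k) :
    𝔼[fun ω => U i l ω * U k q ω] =
      θ ^ (l + q) * (𝔼[fun ω => (ξ 0 ω) ^ 2]) ^ 2 *
        ((if k < i + l then (1 : ℝ) else 0) +
          (if i + l = k then (1 : ℝ) else 0) *
            ∑ j ∈ Finset.range (m - (l + q)), θ ^ (2 * j)) := by
  have hE : 𝔼[fun ω => (ξ 0 ω) ^ 2] = ∫ ω, (ξ 0 ω) ^ 2 := rfl
  have hUgen : ∀ (r s : ℕ) (ω : Ω), U r s ω =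
      (∑ t ∈ Finset.range m, θ ^ t * (ξ ((r:ℤ) + s - t) ω * ξ (r:ℤ) ω)) +
      (∑ j ∈ Finset.Icc 1 (m - 1), θ ^ j * (ξ ((r:ℤ) + s) ω * ξ ((r:ℤ) - j) ω)) -
      θ ^ s * (∫ ω, (ξ 0 ω) ^ 2) := by
    intro r s ω
    rw [hU r s ω, hE]
    rw [show Finset.range m = insert 0 (Finset.Icc 1 (m - 1)) by
      ext t
      simp only [Finset.mem_range, Finset.mem_insert, Finset.mem_Icc]
      omega]
    rw [Finset.sum_insert (by simp)]
    simp only [pow_zero, Nat.cast_zero, sub_zero, one_mul]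
    rw [show (∑ j ∈ Finset.Icc 1 (m - 1), θ ^ j * ξ ((r:ℤ) + s - j) ω * ξ (r:ℤ) ω)
        = ∑ j ∈ Finset.Icc 1 (m - 1), θ ^ j * (ξ ((r:ℤ) + s - j) ω * ξ (r:ℤ) ω) from
      Finset.sum_congr rfl fun j _ => by ring]
    rw [show (∑ j ∈ Finset.Icc 1 (m - 1), θ ^ j * ξ ((r:ℤ) + s) ω * ξ ((r:ℤ) - j) ω)
        = ∑ j ∈ Finset.Icc 1 (m - 1), θ ^ j * (ξ ((r:ℤ) + s) ω * ξ ((r:ℤ) - j) ω) from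
      Finset.sum_congr rfl fun j _ => by ring]
    ring
  have key : (fun ω => U i l ω * U k q ω) = fun ω =>
      (∑ t ∈ Finset.range m, ∑ t' ∈ Finset.range m,
        (θ ^ t * (ξ ((i:ℤ) + l - t) ω * ξ (i:ℤ) ω)) *
          (θ ^ t' * (ξ ((k:ℤ) + q - t') ω * ξ (k:ℤ) ω)))
      + (∑ t ∈ Finset.range m, ∑ j' ∈ Finset.Icc 1 (m - 1),
        (θ ^ t * (ξ ((i:ℤ) + l - t) ω * ξ (i:ℤ) ω)) *
          (θ ^ j' * (ξ ((k:ℤ) + q) ω * ξ ((k:ℤ) - j') ω)))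
      + (∑ j ∈ Finset.Icc 1 (m - 1), ∑ t' ∈ Finset.range m,
        (θ ^ j * (ξ ((i:ℤ) + l) ω * ξ ((i:ℤ) - j) ω)) *
          (θ ^ t' * (ξ ((k:ℤ) + q - t') ω * ξ (k:ℤ) ω)))
      + (∑ j ∈ Finset.Icc 1 (m - 1), ∑ j' ∈ Finset.Icc 1 (m - 1),
        (θ ^ j * (ξ ((i:ℤ) + l) ω * ξ ((i:ℤ) - j) ω)) *
          (θ ^ j' * (ξ ((k:ℤ) + q) ω * ξ ((k:ℤ) - j') ω)))
      - (θ ^ q * (∫ ω, (ξ 0 ω) ^ 2)) *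
          (∑ t ∈ Finset.range m, θ ^ t * (ξ ((i:ℤ) + l - t) ω * ξ (i:ℤ) ω))
      - (θ ^ q * (∫ ω, (ξ 0 ω) ^ 2)) *
          (∑ j ∈ Finset.Icc 1 (m - 1), θ ^ j * (ξ ((i:ℤ) + l) ω * ξ ((i:ℤ) - j) ω))
      - (θ ^ l * (∫ ω, (ξ 0 ω) ^ 2)) *
          (∑ t' ∈ Finset.range m, θ ^ t' * (ξ ((k:ℤ) + q - t') ω * ξ (k:ℤ) ω))
      - (θ ^ l * (∫ ω, (ξ 0 ω) ^ 2)) *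
          (∑ j' ∈ Finset.Icc 1 (m - 1), θ ^ j' * (ξ ((k:ℤ) + q) ω * ξ ((k:ℤ) - j') ω))
      + (θ ^ l * (∫ ω, (ξ 0 ω) ^ 2)) * (θ ^ q * (∫ ω, (ξ 0 ω) ^ 2)) := by
    funext ω
    rw [hUgen i l ω, hUgen k q ω, ← Finset.sum_mul_sum, ← Finset.sum_mul_sum,
      ← Finset.sum_mul_sum, ← Finset.sum_mul_sum]
    ring
  have hint2 := xi_int2 ξ hmeas hindep hident hcentered hL4
  have hintT := L_int_term ξ hmeas hindep hident hcentered hL4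
  have hS1 : Integrable (fun ω => ∑ t ∈ Finset.range m, ∑ t' ∈ Finset.range m,
      (θ ^ t * (ξ ((i:ℤ) + l - t) ω * ξ (i:ℤ) ω)) *
        (θ ^ t' * (ξ ((k:ℤ) + q - t') ω * ξ (k:ℤ) ω))) ℙ :=
    integrable_finset_sum _ (fun t _ => integrable_finset_sum _ (fun t' _ => hintT _ _ _ _ _ _))
  have hS2 : Integrable (fun ω => ∑ t ∈ Finset.range m, ∑ j' ∈ Finset.Icc 1 (m - 1),
      (θ ^ t * (ξ ((i:ℤ) + l - t) ω * ξ (i:ℤ) ω)) *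
        (θ ^ j' * (ξ ((k:ℤ) + q) ω * ξ ((k:ℤ) - j') ω))) ℙ :=
    integrable_finset_sum _ (fun t _ => integrable_finset_sum _ (fun t' _ => hintT _ _ _ _ _ _))
  have hS3 : Integrable (fun ω => ∑ j ∈ Finset.Icc 1 (m - 1), ∑ t' ∈ Finset.range m,
      (θ ^ j * (ξ ((i:ℤ) + l) ω * ξ ((i:ℤ) - j) ω)) *
        (θ ^ t' * (ξ ((k:ℤ) + q - t') ω * ξ (k:ℤ) ω))) ℙ :=
    integrable_finset_sum _ (fun t _ => integrable_finset_sum _ (fun t' _ => hintT _ _ _ _ _ _))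
  have hS4 : Integrable (fun ω => ∑ j ∈ Finset.Icc 1 (m - 1), ∑ j' ∈ Finset.Icc 1 (m - 1),
      (θ ^ j * (ξ ((i:ℤ) + l) ω * ξ ((i:ℤ) - j) ω)) *
        (θ ^ j' * (ξ ((k:ℤ) + q) ω * ξ ((k:ℤ) - j') ω))) ℙ :=
    integrable_finset_sum _ (fun t _ => integrable_finset_sum _ (fun t' _ => hintT _ _ _ _ _ _))
  have hA : Integrable (fun ω => ∑ t ∈ Finset.range m,
      θ ^ t * (ξ ((i:ℤ) + l - t) ω * ξ (i:ℤ) ω)) ℙ :=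
    integrable_finset_sum _ (fun t _ => (hint2 _ _).const_mul _)
  have hB : Integrable (fun ω => ∑ j ∈ Finset.Icc 1 (m - 1),
      θ ^ j * (ξ ((i:ℤ) + l) ω * ξ ((i:ℤ) - j) ω)) ℙ :=
    integrable_finset_sum _ (fun t _ => (hint2 _ _).const_mul _)
  have hA' : Integrable (fun ω => ∑ t' ∈ Finset.range m,
      θ ^ t' * (ξ ((k:ℤ) + q - t') ω * ξ (k:ℤ) ω)) ℙ :=
    integrable_finset_sum _ (fun t _ => (hint2 _ _).const_mul _)
  have hB' : Integrable (fun ω => ∑ j' ∈ Finset.Icc 1 (m - 1),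
      θ ^ j' * (ξ ((k:ℤ) + q) ω * ξ ((k:ℤ) - j') ω)) ℙ :=
    integrable_finset_sum _ (fun t _ => (hint2 _ _).const_mul _)
  rw [hE, key, int_decomp _ _ _ _ _ _ _ _ (θ ^ l * (∫ ω, (ξ 0 ω) ^ 2))
      (θ ^ q * (∫ ω, (ξ 0 ω) ^ 2)) hS1 hS2 hS3 hS4 hA hB hA' hB']
  rw [L_AA ξ hmeas hindep hident hcentered hL4 θ M m l q i k hl hlq hqM hm hik,
    L_AB ξ hmeas hindep hident hcentered hL4 θ M m l q i k hl hlq hqM hm hik,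
    L_BA ξ hmeas hindep hident hcentered hL4 θ M m l q i k hl hlq hqM hm hik,
    L_BB ξ hmeas hindep hident hcentered hL4 θ M m l q i k hl hlq hqM hm hik,
    L_A ξ hmeas hindep hident hcentered hL4 θ m i l (by omega),
    L_A ξ hmeas hindep hident hcentered hL4 θ m k q (by omega),
    L_B ξ hmeas hindep hident hcentered hL4 θ m i l (by omega),
    L_B ξ hmeas hindep hident hcentered hL4 θ m k q (by omega)]
  have hS0 : ∑ j ∈ Finset.range (m - (l + q)), θ ^ (2 * j)
      = 1 + ∑ j ∈ Finset.Icc 1 (m - 1 - (l + q)), θ ^ (2 * j) := by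
    rw [show Finset.range (m - (l + q)) = insert 0 (Finset.Icc 1 (m - 1 - (l + q))) by
      ext t
      simp only [Finset.mem_range, Finset.mem_insert, Finset.mem_Icc]
      omega]
    rw [Finset.sum_insert (by simp)]
    norm_num
  rcases Nat.lt_trichotomy k (i + l) with hc | hc | hc
  · rw [if_pos (show k ≤ i + l by omega), if_neg (show ¬ i + l = k by omega),
      if_pos hc, if_neg (show ¬ i + l = k by omega)]
    ring
  · rw [if_pos (show k ≤ i + l by omega), if_pos (show i + l = k by omega),
      if_neg (show ¬ k < i + l by omega), if_pos (show i + l = k by omega), hS0]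
    ring
  · rw [if_neg (show ¬ k ≤ i + l by omega), if_neg (show ¬ i + l = k by omega),
      if_neg (show ¬ k < i + l by omega), if_neg (show ¬ i + l = k by omega)]
    ring
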